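/- (Reidemeister–Schreier for L-presentations) Every finite-index subgroup of a finitely L-presented group is itself finitely L-presented. -/

import Mathlib

/-- A group `G` is finitely `L`-presented if for some finite alphabet (modelled as `Fin n`),
finite sets `Q`, `R` of relators and a finite set `Φ` of endomorphisms of the free group
`F`, the group `G` is isomorphic to `F/K` where `K` is the normal closure of
`Q ∪ ⋃_{σ ∈ Φ*} R^σ`, with `Φ*` the monoid of endomorphisms generated by `Φ`. -/
def IsFinitelyLPresented (G : Type u) [Group G] : Prop :=
  ∃ (n : ℕ) (Q R : Finset (FreeGroup (Fin n)))
    (Φ : Finset (Monoid.End (FreeGroup (Fin n)))),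
    Nonempty ((FreeGroup (Fin n) ⧸ Subgroup.normalClosure
      ((Q : Set (FreeGroup (Fin n))) ∪
        ⋃ σ ∈ Submonoid.closure (Φ : Set (Monoid.End (FreeGroup (Fin n)))),
          ⇑σ '' (R : Set (FreeGroup (Fin n))))) ≃* G)

namespace RSaux

noncomputable section

/-- Inside a finitely generated free group, below any finite-index subgroup there is a
finite-index subgroup invariant under all endomorphisms. -/
theorem exists_fullyInvariant {n : ℕ} (U : Subgroup (FreeGroup (Fin n))) (hU : U.index ≠ 0) :
    ∃ W : Subgroup (FreeGroup (Fin n)), W ≤ U ∧ W.index ≠ 0 ∧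
      ∀ (σ : Monoid.End (FreeGroup (Fin n))), ∀ x ∈ W, σ x ∈ W := by
  classical
  set F := FreeGroup (Fin n)
  haveI : Finite (F ⧸ U) := Nat.finite_of_card_ne_zero hU
  haveI : Finite (F →* Equiv.Perm (F ⧸ U)) :=
    Finite.of_injective (fun φ => (fun i => φ (FreeGroup.of i) : Fin n → Equiv.Perm (F ⧸ U)))
      (by intro φ₁ φ₂ h; exact FreeGroup.ext_hom _ _ fun a => congrFun h a)
  refine ⟨⨅ (φ : F →* Equiv.Perm (F ⧸ U)), φ.ker, ?_, ?_, ?_⟩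
  · refine le_trans (iInf_le _ (MulAction.toPermHom F (F ⧸ U))) ?_
    rw [← Subgroup.normalCore_eq_ker]
    exact U.normalCore_le
  · have : ∀ φ : F →* Equiv.Perm (F ⧸ U), (MonoidHom.ker φ).FiniteIndex := by
      intro φ
      constructor
      rw [Subgroup.index_ker]
      exact Nat.card_ne_zero.mpr ⟨⟨1, one_mem _⟩, inferInstance⟩
    exact (Subgroup.finiteIndex_iInf this).index_ne_zero
  · intro σ x hx
    rw [Subgroup.mem_iInf] at hx ⊢
    intro φ
    exact hx (φ.comp σ)

theorem main_lemma {n : ℕ} (Q R : Finset (FreeGroup (Fin n)))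
    (Φ : Finset (Monoid.End (FreeGroup (Fin n))))
    (U : Subgroup (FreeGroup (Fin n)))
    (hKU : Subgroup.normalClosure ((Q : Set (FreeGroup (Fin n))) ∪
        ⋃ σ ∈ Submonoid.closure (Φ : Set (Monoid.End (FreeGroup (Fin n)))),
          ⇑σ '' (R : Set (FreeGroup (Fin n)))) ≤ U)
    (hU : U.index ≠ 0) :
    ∃ (m : ℕ) (Q' R' : Finset (FreeGroup (Fin m)))
      (Φ' : Finset (Monoid.End (FreeGroup (Fin m))))
      (ψ : FreeGroup (Fin m) →* FreeGroup (Fin n)),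
      ψ.range = U ∧
      Subgroup.normalClosure ((Q' : Set (FreeGroup (Fin m))) ∪
        ⋃ σ ∈ Submonoid.closure (Φ' : Set (Monoid.End (FreeGroup (Fin m)))),
          ⇑σ '' (R' : Set (FreeGroup (Fin m))))
        = (Subgroup.normalClosure ((Q : Set (FreeGroup (Fin n))) ∪
        ⋃ σ ∈ Submonoid.closure (Φ : Set (Monoid.End (FreeGroup (Fin n)))),
          ⇑σ '' (R : Set (FreeGroup (Fin n))))).comap ψ := by
  classical
  set S : Set (FreeGroup (Fin n)) := ((Q : Set (FreeGroup (Fin n))) ∪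
      ⋃ σ ∈ Submonoid.closure (Φ : Set (Monoid.End (FreeGroup (Fin n)))), ⇑σ '' (R : Set (FreeGroup (Fin n)))) with hS
  set K : Subgroup (FreeGroup (Fin n)) := Subgroup.normalClosure S with hKdef
  haveI : K.Normal := Subgroup.normalClosure_normal
  have hKU' : K ≤ U := by rw [hKdef, hS]; exact hKU
  haveI : Group.FG (FreeGroup (Fin n)) :=
    Group.fg_iff.mpr ⟨Set.range FreeGroup.of, FreeGroup.closure_range_of _, Set.finite_range _⟩
  haveI hUFI : U.FiniteIndex := ⟨hU⟩
  -- the fully invariant subgroup W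
  obtain ⟨W, hWU, hWidx, hWinv⟩ := exists_fullyInvariant U hU
  -- the orbit part K_R
  set OR : Set (FreeGroup (Fin n)) := (⋃ σ ∈ Submonoid.closure (Φ : Set (Monoid.End (FreeGroup (Fin n)))), ⇑σ '' (R : Set (FreeGroup (Fin n)))) with hOR
  set KR : Subgroup (FreeGroup (Fin n)) := Subgroup.normalClosure OR with hKRdef
  haveI : KR.Normal := Subgroup.normalClosure_normal
  have hKRK : KR ≤ K := Subgroup.normalClosure_le_normal
    (le_trans Set.subset_union_right Subgroup.subset_normalClosure)
  have hKRinv : ∀ σ ∈ Submonoid.closure (Φ : Set (Monoid.End (FreeGroup (Fin n)))), ∀ x ∈ KR, σ x ∈ KR := by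
    intro σ hσ x hx
    haveI : (KR.comap (σ : FreeGroup (Fin n) →* FreeGroup (Fin n))).Normal :=
      Subgroup.Normal.comap ‹KR.Normal› _
    have hle : KR ≤ KR.comap (σ : FreeGroup (Fin n) →* FreeGroup (Fin n)) := by
      rw [hKRdef]
      apply Subgroup.normalClosure_le_normal
      intro y hy
      rw [hOR] at hy
      simp only [Set.mem_iUnion] at hy
      obtain ⟨τ, hτ, r, hr, rfl⟩ := hy
      refine Subgroup.mem_comap.mpr (Subgroup.subset_normalClosure ?_)
      rw [hOR]
      refine Set.mem_iUnion₂.mpr ⟨σ * τ, Submonoid.mul_mem _ hσ hτ,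
        ⟨r, hr, rfl⟩⟩
    exact hle hx
  -- V
  set V : Subgroup (FreeGroup (Fin n)) := W ⊔ KR with hVdef
  haveI hWn : W.Normal := ⟨fun w hw g => hWinv ((MulAut.conj g).toMonoidHom : Monoid.End (FreeGroup (Fin n))) w hw⟩
  haveI hVn : V.Normal := Subgroup.sup_normal W KR
  have hVU : V ≤ U := sup_le hWU (le_trans hKRK hKU')
  have hVidx : V.index ≠ 0 := by
    intro h0
    exact hWidx (Nat.eq_zero_of_zero_dvd (h0 ▸ Subgroup.index_dvd_of_le le_sup_left))
  haveI : V.FiniteIndex := ⟨hVidx⟩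
  have hVinv : ∀ σ ∈ Submonoid.closure (Φ : Set (Monoid.End (FreeGroup (Fin n)))), ∀ x ∈ V, σ x ∈ V := by
    intro σ hσ
    have : V ≤ V.comap (σ : FreeGroup (Fin n) →* FreeGroup (Fin n)) := by
      apply sup_le
      · exact fun w hw => Subgroup.mem_comap.mpr (Subgroup.mem_sup_left (hWinv σ w hw))
      · exact fun x hx => Subgroup.mem_comap.mpr (Subgroup.mem_sup_right (hKRinv σ hσ x hx))
    exact fun x hx => this hx
  -- generators
  obtain ⟨SV, hSV⟩ : V.FG := (Group.fg_iff_subgroup_fg V).mp (Subgroup.fg_of_index_ne_zero V)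
  obtain ⟨SU, hSU⟩ : U.FG := (Group.fg_iff_subgroup_fg U).mp (Subgroup.fg_of_index_ne_zero U)
  set a := SV.card with ha
  set b := SU.card with hb
  set gV : Fin a → FreeGroup (Fin n) := fun i => ((Fintype.equivFinOfCardEq (Fintype.card_coe SV)).symm i : FreeGroup (Fin n))
    with hgVdef
  set gU : Fin b → FreeGroup (Fin n) := fun i => ((Fintype.equivFinOfCardEq (Fintype.card_coe SU)).symm i : FreeGroup (Fin n))
    with hgUdef
  have hgVmem : ∀ i, gV i ∈ V := by
    intro i
    rw [← hSV]
    exact Subgroup.subset_closure (by simp [hgVdef])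
  have hgVrange : Set.range gV = (SV : Set (FreeGroup (Fin n))) := by
    ext x
    constructor
    · rintro ⟨i, rfl⟩; simp [hgVdef]
    · rintro hx
      exact ⟨Fintype.equivFinOfCardEq (Fintype.card_coe SV) ⟨x, hx⟩, by simp [hgVdef]⟩
  have hgUrange : Set.range gU = (SU : Set (FreeGroup (Fin n))) := by
    ext x
    constructor
    · rintro ⟨i, rfl⟩; simp [hgUdef]
    · rintro hx
      exact ⟨Fintype.equivFinOfCardEq (Fintype.card_coe SU) ⟨x, hx⟩, by simp [hgUdef]⟩
  -- the big free group on a + b generators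
  set m' := a + b with hm'
  set ghat : Fin m' → FreeGroup (Fin n) :=
    fun i => Fin.addCases (fun i₁ => gV i₁) (fun i₂ => gU i₂) i with hghat
  set ψ : FreeGroup (Fin m') →* FreeGroup (Fin n) := FreeGroup.lift ghat with hψdef
  have hψofl : ∀ i₁ : Fin a, ψ (FreeGroup.of (Fin.castAdd b i₁)) = gV i₁ := by
    intro i₁; rw [hψdef]; simp [FreeGroup.lift_apply_of, hghat]
  have hψofr : ∀ i₂ : Fin b, ψ (FreeGroup.of (Fin.natAdd a i₂)) = gU i₂ := by
    intro i₂; rw [hψdef]; simp [FreeGroup.lift_apply_of, hghat]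
  have hψrange : ψ.range = U := by
    rw [hψdef, FreeGroup.range_lift_eq_closure]
    have hr : Set.range ghat = Set.range gV ∪ Set.range gU := by
      ext x
      constructor
      · rintro ⟨i, rfl⟩
        refine Fin.addCases (fun i₁ => ?_) (fun i₂ => ?_) i
        · left; exact ⟨i₁, by simp [hghat]⟩
        · right; exact ⟨i₂, by simp [hghat]⟩
      · rintro (⟨i₁, rfl⟩ | ⟨i₂, rfl⟩)
        · exact ⟨Fin.castAdd b i₁, by simp [hghat]⟩
        · exact ⟨Fin.natAdd a i₂, by simp [hghat]⟩
    rw [hr, Subgroup.closure_union, hgVrange, hgUrange, hSV, hSU]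
    exact sup_eq_right.mpr hVU
  have hψmem : ∀ w, ψ w ∈ U := by
    intro w; rw [← hψrange]; exact ⟨w, rfl⟩
  -- corestriction and section
  set ψ0 : FreeGroup (Fin m') →* U := ψ.codRestrict U hψmem with hψ0def
  have hψ0surj : Function.Surjective ψ0 := by
    rintro ⟨u, hu⟩
    rw [← hψrange] at hu
    obtain ⟨w, hw⟩ := hu
    exact ⟨w, Subtype.ext hw⟩
  set sec : (↥U) →* FreeGroup (Fin m') :=
    IsFreeGroup.lift (fun gen => Classical.choose (hψ0surj (IsFreeGroup.of gen))) with hsecdef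
  have hsec0 : ∀ u : ↥U, ψ0 (sec u) = u := by
    have h : ψ0.comp sec = MonoidHom.id ↥U := by
      apply IsFreeGroup.ext_hom
      intro g
      simp only [MonoidHom.comp_apply, MonoidHom.id_apply, hsecdef, IsFreeGroup.lift_of]
      exact Classical.choose_spec (hψ0surj (IsFreeGroup.of g))
    intro u
    exact DFunLike.congr_fun h u
  have hsecψ : ∀ u : ↥U, ψ (sec u) = (u : FreeGroup (Fin n)) := by
    intro u
    exact congrArg Subtype.val (hsec0 u)
  -- first block inclusion and projection
  set j1 : FreeGroup (Fin a) →* FreeGroup (Fin m') := FreeGroup.map (Fin.castAdd b) with hj1def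
  set pp : FreeGroup (Fin m') →* FreeGroup (Fin m') :=
    FreeGroup.lift (fun i => Fin.addCases (fun i₁ => FreeGroup.of (Fin.castAdd b i₁))
      (fun _ => (1 : FreeGroup (Fin m'))) i) with hppdef
  have hppj1 : ∀ w, pp (j1 w) = j1 w := by
    have h : pp.comp j1 = j1 := by
      apply FreeGroup.ext_hom
      intro i
      simp [hppdef, hj1def, FreeGroup.map.of, FreeGroup.lift_apply_of]
    exact fun w => DFunLike.congr_fun h w
  set χV : FreeGroup (Fin a) →* FreeGroup (Fin n) := FreeGroup.lift gV with hχVdef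
  have hψj1 : ∀ w, ψ (j1 w) = χV w := by
    have h : ψ.comp j1 = χV := by
      apply FreeGroup.ext_hom; intro i
      simp only [MonoidHom.comp_apply, hχVdef, hj1def, FreeGroup.map.of, FreeGroup.lift_apply_of]
      exact hψofl i
    exact fun w => DFunLike.congr_fun h w
  have hχVsurj : ∀ v ∈ V, ∃ w : FreeGroup (Fin a), χV w = v := by
    intro v hv
    have hmem : v ∈ χV.range := by
      rw [hχVdef, FreeGroup.range_lift_eq_closure, hgVrange, hSV]
      exact hv
    exact hmem
  set secV : ↥V → FreeGroup (Fin a) := fun v => Classical.choose (hχVsurj v v.2) with hsecVdef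
  have hsecV : ∀ v : ↥V, χV (secV v) = (v : FreeGroup (Fin n)) :=
    fun v => Classical.choose_spec (hχVsurj v v.2)
  -- lifted endomorphisms
  set tauF : Monoid.End (FreeGroup (Fin n)) → (FreeGroup (Fin m') →* FreeGroup (Fin m')) :=
    fun σ => FreeGroup.lift (fun i => Fin.addCases
      (fun i₁ => if h : σ (gV i₁) ∈ V then j1 (secV ⟨σ (gV i₁), h⟩) else 1)
      (fun _ => (1 : FreeGroup (Fin m'))) i) with htauFdef
  set kapF : FreeGroup (Fin n) → (FreeGroup (Fin m') →* FreeGroup (Fin m')) :=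
    fun t => FreeGroup.lift (fun i => Fin.addCases
      (fun i₁ => if h : t * gV i₁ * t⁻¹ ∈ V then j1 (secV ⟨t * gV i₁ * t⁻¹, h⟩) else 1)
      (fun _ => (1 : FreeGroup (Fin m'))) i) with hkapFdef
  have htau_p : ∀ σ w, pp (tauF σ w) = tauF σ w := by
    intro σ
    have h : pp.comp (tauF σ) = tauF σ := by
      apply FreeGroup.ext_hom; intro i
      simp only [MonoidHom.comp_apply, htauFdef, FreeGroup.lift_apply_of]
      refine Fin.addCases (fun i₁ => ?_) (fun i₂ => ?_) i
      · simp only [Fin.addCases_left]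
        split
        · exact hppj1 _
        · exact map_one pp
      · simp only [Fin.addCases_right, map_one]
    exact fun w => DFunLike.congr_fun h w
  have hkap_p : ∀ t w, pp (kapF t w) = kapF t w := by
    intro t
    have h : pp.comp (kapF t) = kapF t := by
      apply FreeGroup.ext_hom; intro i
      simp only [MonoidHom.comp_apply, hkapFdef, FreeGroup.lift_apply_of]
      refine Fin.addCases (fun i₁ => ?_) (fun i₂ => ?_) i
      · simp only [Fin.addCases_left]
        split
        · exact hppj1 _
        · exact map_one pp
      · simp only [Fin.addCases_right, map_one]
    exact fun w => DFunLike.congr_fun h w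
  have htau_ψ : ∀ σ : Monoid.End (FreeGroup (Fin n)), (∀ x ∈ V, σ x ∈ V) →
      ∀ w, ψ (tauF σ w) = σ (ψ (pp w)) := by
    intro σ hσV
    have h : ψ.comp (tauF σ) =
        (σ : FreeGroup (Fin n) →* FreeGroup (Fin n)).comp (ψ.comp pp) := by
      apply FreeGroup.ext_hom; intro i
      simp only [MonoidHom.comp_apply, htauFdef, hppdef, FreeGroup.lift_apply_of]
      refine Fin.addCases (fun i₁ => ?_) (fun i₂ => ?_) i
      · simp only [Fin.addCases_left]
        rw [dif_pos (hσV (gV i₁) (hgVmem i₁)), hψj1, hsecV]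
        show σ (gV i₁) = σ (ψ (pp (FreeGroup.of (Fin.castAdd b i₁))))
        rw [hppdef, FreeGroup.lift_apply_of, Fin.addCases_left, hψofl]
      · simp only [Fin.addCases_right, map_one]
        show (1 : FreeGroup (Fin n)) = σ (ψ (pp (FreeGroup.of (Fin.natAdd a i₂))))
        rw [hppdef, FreeGroup.lift_apply_of, Fin.addCases_right, map_one, map_one]
    exact fun w => DFunLike.congr_fun h w
  have hkap_ψ : ∀ t : FreeGroup (Fin n), ∀ w, ψ (kapF t w) = t * ψ (pp w) * t⁻¹ := by
    intro t
    have h : ψ.comp (kapF t) = ((MulAut.conj t).toMonoidHom).comp (ψ.comp pp) := by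
      apply FreeGroup.ext_hom; intro i
      simp only [MonoidHom.comp_apply, hkapFdef, hppdef, FreeGroup.lift_apply_of]
      refine Fin.addCases (fun i₁ => ?_) (fun i₂ => ?_) i
      · simp only [Fin.addCases_left]
        rw [dif_pos (hVn.conj_mem _ (hgVmem i₁) t), hψj1, hsecV]
        simp [MulAut.conj_apply, hψofl]
      · simp only [Fin.addCases_right, map_one]
    intro w
    have := DFunLike.congr_fun h w
    simpa [MulAut.conj_apply] using this
  -- transversal of right cosets
  haveI : Finite (FreeGroup (Fin n) ⧸ U) := Nat.finite_of_card_ne_zero hU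
  haveI : Finite (Quotient (QuotientGroup.rightRel U)) :=
    Finite.of_equiv _ (QuotientGroup.quotientRightRelEquivQuotientLeftRel U).symm
  haveI := Fintype.ofFinite (Quotient (QuotientGroup.rightRel U))
  set tr : Quotient (QuotientGroup.rightRel U) → FreeGroup (Fin n) := Quotient.out with htrdef
  have htr : ∀ f : FreeGroup (Fin n), ∃ u ∈ U, f = u * tr (Quotient.mk _ f) := by
    intro f
    have h1 : QuotientGroup.rightRel U (tr (Quotient.mk _ f)) f := Quotient.mk_out f
    rw [QuotientGroup.rightRel_apply] at h1
    exact ⟨f * (tr (Quotient.mk _ f))⁻¹, h1, by group⟩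
  -- canonical lifts of the base relators
  set rhat : FreeGroup (Fin n) → FreeGroup (Fin m') :=
    fun r => if h : r ∈ V then j1 (secV ⟨r, h⟩) else 1 with hrhatdef
  have hrhat_p : ∀ r, pp (rhat r) = rhat r := by
    intro r; rw [hrhatdef]; dsimp only; split
    · exact hppj1 _
    · exact map_one pp
  have hrhatψ : ∀ r, ∀ h : r ∈ V, ψ (rhat r) = r := by
    intro r h; rw [hrhatdef]; dsimp only; rw [dif_pos h, hψj1, hsecV]
  have hRV : ∀ r ∈ (R : Set (FreeGroup (Fin n))), r ∈ V := by
    intro r hr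
    refine Subgroup.mem_sup_right (Subgroup.subset_normalClosure ?_)
    exact Set.mem_iUnion₂.mpr ⟨1, Submonoid.one_mem _, ⟨r, hr, rfl⟩⟩
  -- the data of the new L-presentation
  set Φ' : Finset (Monoid.End (FreeGroup (Fin m'))) :=
    (Φ.image fun σ => (tauF σ : Monoid.End (FreeGroup (Fin m')))) ∪
    (Finset.univ.image fun c : Quotient (QuotientGroup.rightRel U) =>
      (kapF (tr c) : Monoid.End (FreeGroup (Fin m')))) with hΦ'def
  set R' : Finset (FreeGroup (Fin m')) := R.image rhat with hR'def
  set DQ : Finset (FreeGroup (Fin m')) :=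
    Finset.univ.image
      (fun i : Fin m' => FreeGroup.of i * (sec ⟨ψ (FreeGroup.of i), hψmem _⟩)⁻¹) with hDQdef
  set TQ : Finset (FreeGroup (Fin m')) :=
    (Finset.univ ×ˢ Q).image
      (fun cq : Quotient (QuotientGroup.rightRel U) × FreeGroup (Fin n) =>
        if h : tr cq.1 * cq.2 * (tr cq.1)⁻¹ ∈ U then sec ⟨tr cq.1 * cq.2 * (tr cq.1)⁻¹, h⟩
        else 1) with hTQdef
  set Q' : Finset (FreeGroup (Fin m')) := DQ ∪ TQ with hQ'def
  set N : Subgroup (FreeGroup (Fin m')) :=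
    Subgroup.normalClosure ((Q' : Set (FreeGroup (Fin m'))) ∪
      ⋃ μ ∈ Submonoid.closure (Φ' : Set (Monoid.End (FreeGroup (Fin m')))),
        ⇑μ '' (R' : Set (FreeGroup (Fin m')))) with hNdef
  haveI hNnormal : N.Normal := Subgroup.normalClosure_normal
  -- the kernel of ψ is contained in N
  have hof_sec_mem : ∀ i : Fin m',
      FreeGroup.of i * (sec ⟨ψ (FreeGroup.of i), hψmem _⟩)⁻¹ ∈ N := by
    intro i
    refine Subgroup.subset_normalClosure (Or.inl ?_)
    rw [hQ'def]
    push_cast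
    exact Set.mem_union_left _ (Finset.mem_coe.mpr (Finset.mem_image_of_mem _ (Finset.mem_univ i)))
  have hkerN : ∀ w, ψ w = 1 → w ∈ N := by
    have hkey : ∀ w : FreeGroup (Fin m'),
        (QuotientGroup.mk' N) w = (QuotientGroup.mk' N) (sec ⟨ψ w, hψmem w⟩) := by
      have h : (QuotientGroup.mk' N) = (QuotientGroup.mk' N).comp (sec.comp ψ0) := by
        apply FreeGroup.ext_hom; intro i
        simp only [MonoidHom.comp_apply, QuotientGroup.mk'_apply]
        have hgen := hof_sec_mem i
        have h2 : (FreeGroup.of i)⁻¹ *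
            ((FreeGroup.of i * (sec ⟨ψ (FreeGroup.of i), hψmem _⟩)⁻¹)⁻¹) * (FreeGroup.of i) ∈ N :=
          hNnormal.conj_mem _ (N.inv_mem hgen) _
        have h3 : (FreeGroup.of i)⁻¹ * sec ⟨ψ (FreeGroup.of i), hψmem _⟩ ∈ N := by
          have hh : (FreeGroup.of i)⁻¹ * sec ⟨ψ (FreeGroup.of i), hψmem _⟩ =
              (FreeGroup.of i)⁻¹ *
              ((FreeGroup.of i * (sec ⟨ψ (FreeGroup.of i), hψmem _⟩)⁻¹)⁻¹) * (FreeGroup.of i) := by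
            group
          rw [hh]; exact h2
        exact (QuotientGroup.eq).mpr h3
      intro w
      exact DFunLike.congr_fun h w
    intro w hw
    have h1 := hkey w
    have h2 : (⟨ψ w, hψmem w⟩ : ↥U) = 1 := Subtype.ext hw
    rw [h2, map_one, map_one] at h1
    exact (QuotientGroup.eq_one_iff w).mp h1
  have hNsec : ∀ (g : FreeGroup (Fin n)) (hgU : g ∈ U), (∃ w ∈ N, ψ w = g) →
      sec ⟨g, hgU⟩ ∈ N := by
    rintro g hgU ⟨w, hwN, rfl⟩
    have h1 : ψ (sec ⟨ψ w, hgU⟩ * w⁻¹) = 1 := by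
      rw [map_mul, map_inv, hsecψ]
      simp
    have h2 : sec ⟨ψ w, hgU⟩ * w⁻¹ ∈ N := hkerN _ h1
    have h3 := N.mul_mem h2 hwN
    simpa using h3
  -- conjugation endomorphisms and the mixed monoid
  set cEnd : FreeGroup (Fin n) → Monoid.End (FreeGroup (Fin n)) :=
    fun t => (MulAut.conj t).toMonoidHom with hcEnddef
  have hcEnd_apply : ∀ t x, cEnd t x = t * x * t⁻¹ := by
    intro t x; rw [hcEnddef]; rfl
  set MF : Submonoid (Monoid.End (FreeGroup (Fin n))) :=
    Submonoid.closure ((Φ : Set (Monoid.End (FreeGroup (Fin n)))) ∪ Set.range cEnd) with hMFdef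
  have hMF : ∀ ρ ∈ MF, ∃ σ' ∈ Submonoid.closure (Φ : Set (Monoid.End (FreeGroup (Fin n)))),
      ∃ f : FreeGroup (Fin n), ∀ x, ρ x = f * σ' x * f⁻¹ := by
    intro ρ hρ
    rw [hMFdef] at hρ
    induction hρ using Submonoid.closure_induction with
    | mem y hy =>
      rcases hy with hy | ⟨t, rfl⟩
      · exact ⟨y, Submonoid.subset_closure hy, 1, fun x => by simp⟩
      · exact ⟨1, Submonoid.one_mem _, t, fun x => by rw [hcEnd_apply]; rfl⟩
    | one => exact ⟨1, Submonoid.one_mem _, 1, fun x => by simp⟩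
    | mul ρ₁ ρ₂ h₁ h₂ ih₁ ih₂ =>
      obtain ⟨σ₁, hσ₁, f₁, e₁⟩ := ih₁
      obtain ⟨σ₂, hσ₂, f₂, e₂⟩ := ih₂
      refine ⟨σ₁ * σ₂, Submonoid.mul_mem _ hσ₁ hσ₂, f₁ * σ₁ f₂, fun x => ?_⟩
      have e0 : (ρ₁ * ρ₂) x = ρ₁ (ρ₂ x) := rfl
      have e3 : (σ₁ * σ₂) x = σ₁ (σ₂ x) := rfl
      rw [e0, e₂ x, e₁ (f₂ * σ₂ x * f₂⁻¹), e3, map_mul, map_mul, map_inv]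
      group
  have hSK : ∀ σ' ∈ Submonoid.closure (Φ : Set (Monoid.End (FreeGroup (Fin n)))),
      ∀ r ∈ (R : Set (FreeGroup (Fin n))), σ' r ∈ K := by
    intro σ' hσ' r hr
    rw [hKdef]
    refine Subgroup.subset_normalClosure ?_
    rw [hS]
    exact Or.inr (Set.mem_iUnion₂.mpr ⟨σ', hσ', ⟨r, hr, rfl⟩⟩)
  set M' : Submonoid (Monoid.End (FreeGroup (Fin m'))) :=
    Submonoid.closure (Φ' : Set (Monoid.End (FreeGroup (Fin m')))) with hM'def
  have hA : ∀ μ ∈ M', ∃ ρ ∈ MF, ∀ w, pp w = w → (pp (μ w) = μ w ∧ ψ (μ w) = ρ (ψ w)) := by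
    intro μ hμ
    rw [hM'def] at hμ
    induction hμ using Submonoid.closure_induction with
    | mem y hy =>
      rw [hΦ'def] at hy
      rw [Finset.coe_union, Set.mem_union, Finset.mem_coe, Finset.mem_coe] at hy
      rcases hy.imp Finset.mem_image.mp Finset.mem_image.mp with ⟨σ, hσ, rfl⟩ | ⟨c, -, rfl⟩
      · refine ⟨σ, Submonoid.subset_closure (Or.inl hσ), fun w hw => ?_⟩
        exact ⟨htau_p σ w, by
          have := htau_ψ σ (hVinv σ (Submonoid.subset_closure hσ)) w; rw [hw] at this; exact this⟩
      · refine ⟨cEnd (tr c), Submonoid.subset_closure (Or.inr ⟨tr c, rfl⟩), fun w hw => ?_⟩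
        exact ⟨hkap_p _ w, by
          have := hkap_ψ (tr c) w; rw [hw, ← hcEnd_apply] at this; exact this⟩
    | one =>
      refine ⟨1, Submonoid.one_mem _, fun w hw => ⟨hw, rfl⟩⟩
    | mul μ₁ μ₂ hm₁ hm₂ ih₁ ih₂ =>
      obtain ⟨ρ₁, hρ₁, H₁⟩ := ih₁
      obtain ⟨ρ₂, hρ₂, H₂⟩ := ih₂
      refine ⟨ρ₁ * ρ₂, Submonoid.mul_mem _ hρ₁ hρ₂, fun w hw => ?_⟩
      have e1 : (μ₁ * μ₂) w = μ₁ (μ₂ w) := rfl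
      obtain ⟨hp₂, hψ₂⟩ := H₂ w hw
      obtain ⟨hp₁, hψ₁⟩ := H₁ (μ₂ w) hp₂
      refine ⟨by rw [e1]; exact hp₁, ?_⟩
      rw [e1, hψ₁, hψ₂]
      rfl
  have hB : ∀ σ' ∈ Submonoid.closure (Φ : Set (Monoid.End (FreeGroup (Fin n)))),
      ∃ μ ∈ M', ∀ w, pp w = w → (pp (μ w) = μ w ∧ ψ (μ w) = σ' (ψ w)) := by
    intro σ' hσ'
    induction hσ' using Submonoid.closure_induction with
    | mem σ hσ =>
      refine ⟨tauF σ, Submonoid.subset_closure ?_, fun w hw => ?_⟩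
      · rw [hΦ'def]
        exact Finset.mem_coe.mpr (Finset.mem_union_left _ (Finset.mem_image.mpr ⟨σ, hσ, rfl⟩ : (tauF σ : Monoid.End (FreeGroup (Fin m'))) ∈
          Finset.image (fun σ => (tauF σ : Monoid.End (FreeGroup (Fin m')))) Φ))
      · exact ⟨htau_p σ w, by
          have := htau_ψ σ (hVinv σ (Submonoid.subset_closure hσ)) w; rw [hw] at this; exact this⟩
    | one =>
      exact ⟨1, Submonoid.one_mem _, fun w hw => ⟨hw, rfl⟩⟩
    | mul σ₁ σ₂ hs₁ hs₂ ih₁ ih₂ =>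
      obtain ⟨μ₁, hμ₁, H₁⟩ := ih₁
      obtain ⟨μ₂, hμ₂, H₂⟩ := ih₂
      refine ⟨μ₁ * μ₂, Submonoid.mul_mem _ hμ₁ hμ₂, fun w hw => ?_⟩
      have e1 : (μ₁ * μ₂) w = μ₁ (μ₂ w) := rfl
      obtain ⟨hp₂, hψ₂⟩ := H₂ w hw
      obtain ⟨hp₁, hψ₁⟩ := H₁ (μ₂ w) hp₂
      refine ⟨by rw [e1]; exact hp₁, ?_⟩
      rw [e1, hψ₁, hψ₂]
      rfl
  have hmain : N = K.comap ψ := by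
    haveI : (K.comap ψ).Normal := Subgroup.Normal.comap ‹K.Normal› ψ
    apply le_antisymm
    · rw [hNdef]
      apply Subgroup.normalClosure_le_normal
      rintro x (hx | hx)
      · rw [hQ'def] at hx
        rcases Finset.mem_union.mp (Finset.mem_coe.mp hx) with hx | hx
        · rw [hDQdef] at hx
          obtain ⟨i, -, rfl⟩ := Finset.mem_image.mp hx
          refine Subgroup.mem_comap.mpr ?_
          rw [map_mul, map_inv, hsecψ]
          have h9 : ψ (FreeGroup.of i) * (ψ (FreeGroup.of i))⁻¹ = 1 := by group
          rw [h9]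
          exact K.one_mem
        · rw [hTQdef] at hx
          obtain ⟨cq, hcq, rfl⟩ := Finset.mem_image.mp hx
          have hq : cq.2 ∈ Q := (Finset.mem_product.mp hcq).2
          have hqK : cq.2 ∈ K := by
            rw [hKdef]; exact Subgroup.subset_normalClosure (by rw [hS]; exact Or.inl hq)
          have hcK : tr cq.1 * cq.2 * (tr cq.1)⁻¹ ∈ K := ‹K.Normal›.conj_mem _ hqK _
          rw [dif_pos (hKU' hcK)]
          refine Subgroup.mem_comap.mpr ?_
          rw [hsecψ]
          exact hcK
      · simp only [Set.mem_iUnion] at hx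
        obtain ⟨μ, hμ, x', hx', rfl⟩ := hx
        rw [hR'def] at hx'
        obtain ⟨r, hr, rfl⟩ := Finset.mem_image.mp (Finset.mem_coe.mp hx')
        obtain ⟨ρ, hρ, Hρ⟩ := hA μ (by rw [hM'def]; exact hμ)
        obtain ⟨-, hψeq⟩ := Hρ (rhat r) (hrhat_p r)
        refine Subgroup.mem_comap.mpr ?_
        rw [hψeq, hrhatψ r (hRV r (Finset.mem_coe.mpr hr))]
        obtain ⟨σ', hσ', f, hf⟩ := hMF ρ hρ
        rw [hf r]
        exact ‹K.Normal›.conj_mem _ (hSK σ' hσ' r (Finset.mem_coe.mpr hr)) f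
    · intro x hx
      have hxK : ψ x ∈ K := Subgroup.mem_comap.mp hx
      have h1 : x * (sec ⟨ψ x, hψmem x⟩)⁻¹ ∈ N := by
        apply hkerN
        rw [map_mul, map_inv, hsecψ]
        simp
      set Pg : Subgroup (FreeGroup (Fin n)) :=
        { carrier := {f | ∃ h : f ∈ U, sec ⟨f, h⟩ ∈ N}
          one_mem' := ⟨U.one_mem, by
            have h0 : (⟨(1 : FreeGroup (Fin n)), U.one_mem⟩ : ↥U) = 1 := rfl
            rw [h0, map_one]; exact N.one_mem⟩
          mul_mem' := by
            rintro x₁ x₂ ⟨h₁, hs₁⟩ ⟨h₂, hs₂⟩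
            refine ⟨U.mul_mem h₁ h₂, ?_⟩
            have h0 : (⟨x₁ * x₂, U.mul_mem h₁ h₂⟩ : ↥U) = ⟨x₁, h₁⟩ * ⟨x₂, h₂⟩ := rfl
            rw [h0, map_mul]; exact N.mul_mem hs₁ hs₂
          inv_mem' := by
            rintro x₁ ⟨h₁, hs₁⟩
            refine ⟨U.inv_mem h₁, ?_⟩
            have h0 : (⟨x₁⁻¹, U.inv_mem h₁⟩ : ↥U) = (⟨x₁, h₁⟩ : ↥U)⁻¹ := rfl
            rw [h0, map_inv]; exact N.inv_mem hs₁ } with hPgdef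
      have hKP : K ≤ Pg := by
        rw [hKdef]
        have hncl : Subgroup.normalClosure S = Subgroup.closure (Group.conjugatesOfSet S) := rfl
        rw [hncl]
        apply (Subgroup.closure_le _).mpr
        intro y hy
        obtain ⟨s, hs, hconj⟩ := Group.mem_conjugatesOfSet_iff.mp hy
        obtain ⟨c, rfl⟩ := isConj_iff.mp hconj
        obtain ⟨uu, huu, hcut⟩ := htr c
        set t0 := tr (Quotient.mk _ c) with ht0
        have hsK : s ∈ K := by rw [hKdef]; exact Subgroup.subset_normalClosure hs
        have htst : t0 * s * t0⁻¹ ∈ K :=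
          ‹K.Normal›.conj_mem _ hsK _
        have hsecN : sec ⟨t0 * s * t0⁻¹, hKU' htst⟩ ∈ N := by
          rw [hS] at hs
          rcases hs with hsQ | hsO
          · refine Subgroup.subset_normalClosure (Or.inl ?_)
            rw [hQ'def]
            refine Finset.mem_coe.mpr (Finset.mem_union_right _ ?_)
            rw [hTQdef]
            refine Finset.mem_image.mpr ⟨(Quotient.mk _ c, s), ?_, ?_⟩
            · exact Finset.mem_product.mpr ⟨Finset.mem_univ _, Finset.mem_coe.mp hsQ⟩
            · rw [dif_pos (hKU' htst)]
          · rw [hOR] at hsO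
            simp only [Set.mem_iUnion] at hsO
            obtain ⟨σ', hσ', r, hr, rfl⟩ := hsO
            obtain ⟨μ, hμ, Hμ⟩ := hB σ' hσ'
            obtain ⟨hp1, hψ1⟩ := Hμ (rhat r) (hrhat_p r)
            set kk : Monoid.End (FreeGroup (Fin m')) := kapF t0 with hkk
            refine hNsec _ _ ⟨kapF t0 (μ (rhat r)), ?_, ?_⟩
            · have hk : kk ∈ M' := by
                rw [hM'def]
                refine Submonoid.subset_closure ?_
                rw [hΦ'def]
                rw [Finset.coe_union, Set.mem_union, Finset.mem_coe, Finset.mem_coe]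
                exact Or.inr (Finset.mem_image.mpr ⟨Quotient.mk _ c, Finset.mem_univ _, by rw [hkk, ← ht0]⟩)
              have he : kapF t0 (μ (rhat r)) = (kk * μ) (rhat r) := by rw [hkk]; rfl
              rw [he, hNdef]
              refine Subgroup.subset_normalClosure (Or.inr ?_)
              refine Set.mem_iUnion₂.mpr ⟨_, ?_, ⟨rhat r, ?_, rfl⟩⟩
              · exact Submonoid.mul_mem _ hk hμ
              · rw [hR'def]
                exact Finset.mem_coe.mpr (Finset.mem_image_of_mem _ hr)
            · rw [hkap_ψ, hp1, hψ1, hrhatψ r (hRV r hr)]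
        have hyU : c * s * c⁻¹ ∈ U := by
          have h5 : c * s * c⁻¹ = uu * (t0 * s * t0⁻¹) * uu⁻¹ := by
            rw [hcut]; group
          rw [h5]
          exact U.mul_mem (U.mul_mem huu (hKU' htst)) (U.inv_mem huu)
        refine ⟨hyU, ?_⟩
        have hval : (⟨c * s * c⁻¹, hyU⟩ : ↥U) =
            ⟨uu, huu⟩ * ⟨t0 * s * t0⁻¹, hKU' htst⟩ *
            (⟨uu, huu⟩ : ↥U)⁻¹ := by
          apply Subtype.ext
          show c * s * c⁻¹ = uu * (t0 * s * t0⁻¹) * uu⁻¹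
          rw [hcut]; group
        rw [hval, map_mul, map_mul, map_inv]
        exact hNnormal.conj_mem _ hsecN _
      obtain ⟨hu, hsecU⟩ := hKP hxK
      have hdec : x = (x * (sec ⟨ψ x, hψmem x⟩)⁻¹) * sec ⟨ψ x, hψmem x⟩ := by group
      rw [hdec]
      exact N.mul_mem h1 hsecU
  refine ⟨m', Q', R', Φ', ψ, hψrange, ?_⟩
  rw [← hNdef]
  exact hmain

end

end RSaux

open RSaux in
/-- (Reidemeister–Schreier for `L`-presentations) Every finite-index subgroup of a
finitely `L`-presented group is itself finitely `L`-presented. -/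
theorem stmt_16 (G : Type u) [Group G] (hG : IsFinitelyLPresented G)
    (H : Subgroup G) (hH : H.index ≠ 0) :
    IsFinitelyLPresented ↥H := by
  classical
  obtain ⟨n, Q, R, Φ, ⟨e⟩⟩ := hG
  set K : Subgroup (FreeGroup (Fin n)) := Subgroup.normalClosure
      ((Q : Set (FreeGroup (Fin n))) ∪
        ⋃ σ ∈ Submonoid.closure (Φ : Set (Monoid.End (FreeGroup (Fin n)))),
          ⇑σ '' (R : Set (FreeGroup (Fin n)))) with hKdef
  haveI : K.Normal := Subgroup.normalClosure_normal
  set U : Subgroup (FreeGroup (Fin n)) :=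
    (H.comap e.toMonoidHom).comap (QuotientGroup.mk' K) with hUdef
  have hKU : K ≤ U := by
    intro k hk
    have h1 : (QuotientGroup.mk' K) k = 1 := by
      rw [QuotientGroup.mk'_apply, QuotientGroup.eq_one_iff]
      exact hk
    refine Subgroup.mem_comap.mpr ?_
    rw [h1]
    exact Subgroup.mem_comap.mpr (by rw [map_one]; exact H.one_mem)
  have hUidx : U.index ≠ 0 := by
    rw [hUdef, Subgroup.index_comap_of_surjective _ (QuotientGroup.mk'_surjective K),
      Subgroup.index_comap_of_surjective _ e.surjective]
    exact hH
  obtain ⟨m, Q', R', Φ', ψ, hrange, heq⟩ := main_lemma Q R Φ U (hKdef ▸ hKU) hUidx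
  set χG : FreeGroup (Fin m) →* G := ((e.toMonoidHom).comp (QuotientGroup.mk' K)).comp ψ
    with hχGdef
  have hψU : ∀ w, ψ w ∈ U := by
    intro w; rw [← hrange]; exact ⟨w, rfl⟩
  have hχmem : ∀ w, χG w ∈ H := by
    intro w
    have h2 := hψU w
    rw [hUdef] at h2
    exact Subgroup.mem_comap.mp (Subgroup.mem_comap.mp h2)
  set χ : FreeGroup (Fin m) →* ↥H := χG.codRestrict H hχmem with hχdef
  have hχsurj : Function.Surjective χ := by
    rintro ⟨h, hh⟩
    obtain ⟨x, hx⟩ := QuotientGroup.mk'_surjective K (e.symm h)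
    have hxU : x ∈ U := by
      rw [hUdef]
      refine Subgroup.mem_comap.mpr (Subgroup.mem_comap.mpr ?_)
      rw [hx]
      simpa using hh
    obtain ⟨w, hw⟩ : ∃ w, ψ w = x := by
      have := hxU; rw [← hrange] at this; exact this
    refine ⟨w, Subtype.ext ?_⟩
    show χG w = h
    rw [hχGdef]
    simp only [MonoidHom.comp_apply]
    rw [hw, hx]
    simp
  have hker : χ.ker = K.comap ψ := by
    ext x
    constructor
    · intro hx
      have h3 : χG x = 1 := congrArg Subtype.val (MonoidHom.mem_ker.mp hx)
      rw [hχGdef] at h3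
      simp only [MonoidHom.comp_apply] at h3
      have h4 : (QuotientGroup.mk' K) (ψ x) = 1 := by
        apply e.injective
        rw [map_one]
        exact h3
      refine Subgroup.mem_comap.mpr ?_
      rw [QuotientGroup.mk'_apply, QuotientGroup.eq_one_iff] at h4
      exact h4
    · intro hx
      have h4 : (QuotientGroup.mk' K) (ψ x) = 1 := by
        rw [QuotientGroup.mk'_apply, QuotientGroup.eq_one_iff]
        exact Subgroup.mem_comap.mp hx
      refine MonoidHom.mem_ker.mpr (Subtype.ext ?_)
      show χG x = 1
      rw [hχGdef]
      simp only [MonoidHom.comp_apply]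
      rw [h4, map_one]
  refine ⟨m, Q', R', Φ', ⟨?_⟩⟩
  have heq2 : Subgroup.normalClosure ((Q' : Set (FreeGroup (Fin m))) ∪
        ⋃ σ ∈ Submonoid.closure (Φ' : Set (Monoid.End (FreeGroup (Fin m)))),
          ⇑σ '' (R' : Set (FreeGroup (Fin m)))) = χ.ker := by
    rw [hker, heq, hKdef]
  exact (QuotientGroup.quotientMulEquivOfEq heq2).trans
    (QuotientGroup.quotientKerEquivOfSurjective χ hχsurj)
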